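/- The pure braid group P_n of the disc on n strands is isomorphic to the pure braid group P_{n−1}(A) of the annulus on n−1 strands. -/

import Mathlib

open CategoryTheory

noncomputable section

/-- The (reduced) topological complexity of a space: the minimal `k` such that `X × X` admits
a cover by `k+1` open sets, on each of which the free path fibration admits a continuous
section. `⊤` if no such `k` exists. -/
def topologicalComplexity (X : Type) [TopologicalSpace X] : ℕ∞ :=
  sInf {N : ℕ∞ | ∃ k : ℕ, N = k ∧ ∃ U : Fin (k + 1) → Set (X × X),
    (∀ i, IsOpen (U i)) ∧ (∀ p : X × X, ∃ i, p ∈ U i) ∧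
    ∀ i, ∃ s : C(U i, C(unitInterval, X)),
      ∀ u : U i, s u 0 = u.1.1 ∧ s u 1 = u.1.2}

/-- The cohomological dimension of a discrete group: the supremum of the degrees in which
group cohomology with some coefficient module is non-trivial. -/
def cd (G : Type) [Group G] : ℕ∞ :=
  sSup {N : ℕ∞ | ∃ n : ℕ, N = n ∧ ∃ M : Rep ℤ G, Nontrivial (groupCohomology M n)}

/-- A space is aspherical if all its higher homotopy groups vanish. -/
def IsAspherical (X : Type) [TopologicalSpace X] : Prop :=
  ∀ n : ℕ, 2 ≤ n → ∀ x : X, Subsingleton (HomotopyGroup (Fin n) X x)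

/-- `X` is an Eilenberg–MacLane space `K(π,1)` for the group `π`. -/
def IsKPi1 (G : Type) [Group G] (X : Type) [TopologicalSpace X] (x : X) : Prop :=
  PathConnectedSpace X ∧ IsAspherical X ∧ Nonempty (FundamentalGroup X x ≃* G)

/-- The homomorphism of fundamental groups induced by a continuous map. -/
def π₁map {X Y : Type} [TopologicalSpace X] [TopologicalSpace Y] (f : C(X, Y)) (x : X) :
    FundamentalGroup X x →* FundamentalGroup Y (f x) :=
  Functor.mapEnd (⟨x⟩ : FundamentalGroupoid X) (FundamentalGroupoid.fundamentalGroupoidFunctor.map (TopCat.ofHom f : TopCat.of X ⟶ TopCat.of Y))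

/-- The ordered configuration space of `n` points in `X`. -/
def ConfSpace (X : Type) [TopologicalSpace X] (n : ℕ) : Type :=
  {f : Fin n → X // Function.Injective f}

instance (X : Type) [TopologicalSpace X] (n : ℕ) : TopologicalSpace (ConfSpace X n) :=
  inferInstanceAs (TopologicalSpace {f : Fin n → X // Function.Injective f})

/-- Two ordered configurations are equivalent if they differ by a permutation of the labels. -/
def confSetoid (X : Type) [TopologicalSpace X] (n : ℕ) : Setoid (ConfSpace X n) where
  r f g := ∃ σ : Equiv.Perm (Fin n), g.1 = f.1 ∘ σ
  iseqv := by
    constructor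
    · exact fun f => ⟨Equiv.refl _, rfl⟩
    · rintro f g ⟨σ, h⟩
      exact ⟨σ.symm, by funext i; simp [h]⟩
    · rintro f g h ⟨σ, hσ⟩ ⟨τ, hτ⟩
      exact ⟨τ.trans σ, by funext i; simp only [hτ, hσ]; rfl⟩

/-- The unordered configuration space of `n` points in `X`. -/
def UConfSpace (X : Type) [TopologicalSpace X] (n : ℕ) : Type :=
  Quotient (confSetoid X n)

instance (X : Type) [TopologicalSpace X] (n : ℕ) : TopologicalSpace (UConfSpace X n) :=
  inferInstanceAs (TopologicalSpace (Quotient (confSetoid X n)))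

/-- The covering projection from the ordered to the unordered configuration space. -/
def uconfQuot (X : Type) [TopologicalSpace X] (n : ℕ) : C(ConfSpace X n, UConfSpace X n) :=
  ⟨Quotient.mk (confSetoid X n), continuous_quotient_mk'⟩

/-- The map of ordered configuration spaces induced by an injective continuous map. -/
def confMap {X Y : Type} [TopologicalSpace X] [TopologicalSpace Y] (e : C(X, Y))
    (he : Function.Injective e) (n : ℕ) : C(ConfSpace X n, ConfSpace Y n) :=
  ⟨fun f => ⟨e ∘ f.1, he.comp f.2⟩, by
    apply Continuous.subtype_mk
    exact continuous_pi fun i =>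
      e.continuous.comp ((continuous_apply i).comp continuous_subtype_val)⟩

/-- The map of unordered configuration spaces induced by an injective continuous map. -/
def uconfMap {X Y : Type} [TopologicalSpace X] [TopologicalSpace Y] (e : C(X, Y))
    (he : Function.Injective e) (n : ℕ) : C(UConfSpace X n, UConfSpace Y n) :=
  ⟨Quotient.map (confMap e he n)
      (by rintro f g ⟨σ, h⟩; exact ⟨σ, by funext i; exact congrArg e (congrFun h i)⟩),
    ((continuous_quotient_mk').comp (confMap e he n).continuous).quotient_lift _⟩

/-- Forgetting the last point of a configuration (the Fadell–Neuwirth fibration). -/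
def confForget (X : Type) [TopologicalSpace X] (n : ℕ) :
    C(ConfSpace X (n + 1), ConfSpace X n) :=
  ⟨fun f => ⟨f.1 ∘ Fin.castSucc, f.2.comp (Fin.castSucc_injective n)⟩, by
    apply Continuous.subtype_mk
    exact continuous_pi fun i => (continuous_apply _).comp continuous_subtype_val⟩

/-- The inclusion of the fiber of the Fadell–Neuwirth fibration over `c`:
a point of `X` away from `c` is added as the last point of the configuration. -/
def fiberIncl {X : Type} [TopologicalSpace X] {n : ℕ} (c : ConfSpace X n) :
    C({x : X // x ∉ Set.range c.1}, ConfSpace X (n + 1)) :=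
  ⟨fun x => ⟨Fin.snoc c.1 x.1, by
      intro i j hij
      induction i using Fin.lastCases with
      | last =>
        induction j using Fin.lastCases with
        | last => rfl
        | cast j =>
          simp only [Fin.snoc_last, Fin.snoc_castSucc] at hij
          exact absurd ⟨j, hij.symm⟩ x.2
      | cast i =>
        induction j using Fin.lastCases with
        | last =>
          simp only [Fin.snoc_last, Fin.snoc_castSucc] at hij
          exact absurd ⟨i, hij⟩ x.2
        | cast j =>
          simp only [Fin.snoc_castSucc] at hij
          exact congrArg Fin.castSucc (c.2 hij)⟩, by
    apply Continuous.subtype_mk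
    apply continuous_pi
    intro j
    induction j using Fin.lastCases with
    | last => simpa [Fin.snoc_last] using continuous_subtype_val
    | cast j => simpa [Fin.snoc_castSucc] using continuous_const⟩

/-- The projection of the ordered configuration space onto the `k`-th strand. -/
def strandProj (X : Type) [TopologicalSpace X] (n : ℕ) (k : Fin n) : C(ConfSpace X n, X) :=
  ⟨fun f => f.1 k, (continuous_apply k).comp continuous_subtype_val⟩

/-- A closed surface: a compact connected Hausdorff space which is locally
homeomorphic to `ℝ²`. -/
structure IsClosedSurface (S : Type) [TopologicalSpace S] : Prop where
  connected : ConnectedSpace S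
  t2 : T2Space S
  compact : CompactSpace S
  secondCountable : SecondCountableTopology S
  locEuclidean : ∀ x : S, ∃ e : PartialHomeomorph S (ℝ × ℝ), x ∈ e.source

/-- A surface: a closed surface with a finite (possibly empty) set of points removed. -/
def IsSurface (S : Type) [TopologicalSpace S] : Prop :=
  ∃ (T : Type) (_ : TopologicalSpace T) (F : Set T),
    IsClosedSurface T ∧ F.Finite ∧ Nonempty (S ≃ₜ {x : T // x ∉ F})

/-- A punctured surface: a closed surface with a finite positive number of points removed. -/
def IsPuncturedSurface (S : Type) [TopologicalSpace S] : Prop :=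
  ∃ (T : Type) (_ : TopologicalSpace T) (F : Set T),
    IsClosedSurface T ∧ F.Finite ∧ F.Nonempty ∧ Nonempty (S ≃ₜ {x : T // x ∉ F})

/-- The (open) disc. -/
def Disc : Type := Metric.ball (0 : ℝ × ℝ) 1

instance : TopologicalSpace Disc :=
  inferInstanceAs (TopologicalSpace (Metric.ball (0 : ℝ × ℝ) 1))

/-- The annulus `S¹ × ℝ`. -/
def Annulus : Type := Metric.sphere (0 : ℝ × ℝ) 1 × ℝ

instance : TopologicalSpace Annulus :=
  inferInstanceAs (TopologicalSpace (Metric.sphere (0 : ℝ × ℝ) 1 × ℝ))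

/-- The identification generating the Möbius band from `ℝ × ℝ`. -/
def mobiusSetoid : Setoid (ℝ × ℝ) where
  r p q := ∃ n : ℤ, q.1 = p.1 + n ∧ q.2 = (-1 : ℝ) ^ n * p.2
  iseqv := by
    constructor
    · exact fun p => ⟨0, by simp⟩
    · rintro p q ⟨n, h1, h2⟩
      refine ⟨-n, by simp [h1], ?_⟩
      rw [h2, ← mul_assoc, ← zpow_add₀ (by norm_num : (-1 : ℝ) ≠ 0)]
      simp
    · rintro p q r ⟨n, h1, h2⟩ ⟨m, h3, h4⟩
      refine ⟨n + m, by push_cast [h3, h1]; ring, ?_⟩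
      rw [h4, h2, ← mul_assoc, ← zpow_add₀ (by norm_num : (-1 : ℝ) ≠ 0)]
      ring_nf

/-- The (open) Möbius band, as the quotient of `ℝ × ℝ` by `(x, y) ∼ (x + 1, -y)`. -/
def MobiusBand : Type := Quotient mobiusSetoid

instance : TopologicalSpace MobiusBand :=
  inferInstanceAs (TopologicalSpace (Quotient mobiusSetoid))

/-- The base point of the annulus circle. -/
def circBase : Metric.sphere (0 : ℝ × ℝ) 1 :=
  ⟨(1, 0), by simp [Prod.norm_def]⟩

/-- The embedded `n`-torus in the ordered configuration space of the annulus: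
configurations whose `i`-th point lies on the `i`-th of `n` parallel disjoint core circles. -/
def TorusInConf (n : ℕ) : Type :=
  {f : ConfSpace Annulus n // ∀ i : Fin n, (f.1 i).2 = (i : ℝ)}

instance (n : ℕ) : TopologicalSpace (TorusInConf n) :=
  inferInstanceAs (TopologicalSpace {f : ConfSpace Annulus n // ∀ i : Fin n, (f.1 i).2 = (i : ℝ)})

/-- The base configuration on the `n` parallel circles. -/
def torusBase (n : ℕ) : ConfSpace Annulus n :=
  ⟨fun i => (circBase, (i : ℝ)), by
    intro i j h
    have h2 : ((i : ℕ) : ℝ) = ((j : ℕ) : ℝ) := congrArg Prod.snd h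
    exact Fin.val_injective (Nat.cast_injective h2)⟩

/-- The base point of the embedded torus. -/
def torusBasePt (n : ℕ) : TorusInConf n := ⟨torusBase n, fun _ => rfl⟩

/-- The inclusion of the embedded torus in the configuration space of the annulus. -/
def torusIncl (n : ℕ) : C(TorusInConf n, ConfSpace Annulus n) :=
  ⟨Subtype.val, continuous_subtype_val⟩

/-- The inclusion of the configuration space in the `n`-fold product. -/
def confToProd (X : Type) [TopologicalSpace X] (n : ℕ) : C(ConfSpace X n, Fin n → X) :=
  ⟨Subtype.val, continuous_subtype_val⟩

/-- The subgroup `Z_n` of the pure braid group of the annulus generated by the braids moving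
the points along `n` concentric circles; the image of the fundamental group of the embedded
torus. -/
def concentricSubgroup (n : ℕ) :
    Subgroup (FundamentalGroup (ConfSpace Annulus n) (torusBase n)) :=
  (π₁map (torusIncl n) (torusBasePt n)).range

/-- The projection of a configuration onto the pair of its `i`-th and `j`-th points. -/
def pairProj {X : Type} [TopologicalSpace X] {n : ℕ} (i j : Fin n) (hij : i ≠ j) :
    C(ConfSpace X n, ConfSpace X 2) :=
  ⟨fun f => ⟨![f.1 i, f.1 j], by
      intro a b hab
      fin_cases a <;> fin_cases b
      · rfl
      · exact absurd (f.2 hab) hij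
      · exact absurd (f.2 hab) hij.symm
      · rfl⟩, by
    apply Continuous.subtype_mk
    apply continuous_pi
    intro a
    fin_cases a <;>
      (simp; exact (continuous_apply _).comp
        (show Continuous (fun f : ConfSpace X n => f.1) from continuous_subtype_val))⟩

-- AUX BELOW

/-- Configuration spaces of homeomorphic spaces are homeomorphic. -/
def confHomeo {X Y : Type} [TopologicalSpace X] [TopologicalSpace Y] (e : X ≃ₜ Y) (n : ℕ) :
    ConfSpace X n ≃ₜ ConfSpace Y n where
  toFun := confMap ⟨e, e.continuous⟩ e.injective n
  invFun := confMap ⟨e.symm, e.symm.continuous⟩ e.symm.injective n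
  left_inv f := Subtype.ext (funext fun i => e.symm_apply_apply _)
  right_inv f := Subtype.ext (funext fun i => e.apply_symm_apply _)
  continuous_toFun := (confMap _ _ n).continuous
  continuous_invFun := (confMap _ _ n).continuous

def discHomeo : Disc ≃ₜ (ℝ × ℝ) := Homeomorph.unitBall.symm

def expHomeo : ℝ ≃ₜ Set.Ioi (0 : ℝ) where
  toFun x := ⟨Real.exp x, Real.exp_pos x⟩
  invFun y := Real.log y.1
  left_inv x := Real.log_exp x
  right_inv y := Subtype.ext (Real.exp_log y.2)
  continuous_toFun := Real.continuous_exp.subtype_mk _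
  continuous_invFun := Real.continuousOn_log.comp_continuous continuous_subtype_val
    fun y => Set.mem_compl_singleton_iff.mpr (ne_of_gt y.2)

def annulusHomeo : Annulus ≃ₜ ({0}ᶜ : Set (ℝ × ℝ)) :=
  ((Homeomorph.refl (Metric.sphere (0 : ℝ × ℝ) 1)).prodCongr expHomeo).trans
    (homeomorphUnitSphereProd (ℝ × ℝ)).symm

/-- The Fadell–Neuwirth splitting of the configuration space of the plane. -/
def fnHomeo (m : ℕ) :
    ConfSpace (ℝ × ℝ) (m + 1) ≃ₜ (ℝ × ℝ) × ConfSpace ({0}ᶜ : Set (ℝ × ℝ)) m where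
  toFun f := (f.1 (Fin.last m),
    ⟨fun i => ⟨f.1 i.castSucc - f.1 (Fin.last m),
        Set.mem_compl_singleton_iff.mpr (sub_ne_zero.mpr
          (fun h => absurd (f.2 h) (Fin.castSucc_lt_last i).ne))⟩,
      fun i j hij => Fin.castSucc_injective m (f.2 (by
        have h2 := congrArg Subtype.val hij
        simpa [sub_left_inj] using h2))⟩)
  invFun p := ⟨Fin.snoc (fun i => p.1 + (p.2.1 i).1) p.1, by
      intro i j hij
      induction i using Fin.lastCases with
      | last =>
        induction j using Fin.lastCases with
        | last => rfl
        | cast j =>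
          simp only [Fin.snoc_last, Fin.snoc_castSucc] at hij
          exact absurd (left_eq_add.mp hij)
            (Set.mem_compl_singleton_iff.mp (p.2.1 j).2)
      | cast i =>
        induction j using Fin.lastCases with
        | last =>
          simp only [Fin.snoc_last, Fin.snoc_castSucc] at hij
          exact absurd (left_eq_add.mp hij.symm)
            (Set.mem_compl_singleton_iff.mp (p.2.1 i).2)
        | cast j =>
          simp only [Fin.snoc_castSucc] at hij
          exact congrArg Fin.castSucc (p.2.2 (Subtype.ext (add_left_cancel hij)))⟩
  left_inv f := Subtype.ext (funext fun j => by
    induction j using Fin.lastCases with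
    | last => simp
    | cast j => simp only [Fin.snoc_castSucc]; try simp; try abel
    )
  right_inv p := by
    refine Prod.ext ?_ (Subtype.ext (funext fun i => Subtype.ext ?_))
    · simp [Fin.snoc_last]
    · simp [Fin.snoc_castSucc, Fin.snoc_last]
  continuous_toFun := by
    refine Continuous.prodMk ((continuous_apply _).comp continuous_subtype_val) ?_
    refine Continuous.subtype_mk (continuous_pi fun i => Continuous.subtype_mk ?_ _) _
    exact ((continuous_apply i.castSucc).comp continuous_subtype_val).sub
      ((continuous_apply (Fin.last m)).comp continuous_subtype_val)
  continuous_invFun := by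
    refine Continuous.subtype_mk (continuous_pi fun j => ?_) _
    induction j using Fin.lastCases with
    | last => exact continuous_fst.congr fun p => by simp
    | cast j =>
      exact (continuous_fst.add (continuous_subtype_val.comp
        ((continuous_apply j).comp (continuous_subtype_val.comp continuous_snd)))).congr
        fun p => by simp; rfl

/-- Projection onto the second factor of a product with the plane is a homotopy equivalence. -/
def prodSndHE (Z : Type) [TopologicalSpace Z] :
    ContinuousMap.HomotopyEquiv ((ℝ × ℝ) × Z) Z where
  toFun := ⟨Prod.snd, continuous_snd⟩
  invFun := ⟨fun z => (0, z), by fun_prop⟩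
  left_inv := ⟨{
      toFun := fun q => (((q.1 : ℝ) • q.2.1 : ℝ × ℝ), q.2.2)
      continuous_toFun := by fun_prop
      map_zero_left := by intro p; simp
      map_one_left := by intro p; simp }⟩
  right_inv := ⟨ContinuousMap.Homotopy.refl (ContinuousMap.id Z)⟩

def autMulEquivOfEquivalence {C D : Type*} [Category C] [Category D] (e : C ≌ D) (x : C) :
    End x ≃* End (e.functor.obj x) :=
  e.fullyFaithfulFunctor.mulEquivEnd x

def pi1EquivOfHE {X Y : Type} [TopologicalSpace X] [TopologicalSpace Y]
    (h : ContinuousMap.HomotopyEquiv X Y) (x : X) :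
    FundamentalGroup X x ≃* FundamentalGroup Y (h.toFun x) :=
  autMulEquivOfEquivalence
    (FundamentalGroupoidFunctor.equivOfHomotopyEquiv
      (X := TopCat.of X) (Y := TopCat.of Y) h) ⟨x⟩

-- connectivity of Conf(Annulus, m)

lemma interp_lt {u a b c d : ℝ} (h0 : 0 ≤ u) (h1 : u ≤ 1) (hab : a < b) (hcd : c < d) :
    (1 - u) * a + u * c < (1 - u) * b + u * d := by
  rcases h1.lt_or_eq with h1' | rfl
  · nlinarith
  · norm_num; linarith

/-- Vertical move: same circle coordinates, order-compatible heights. -/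
lemma joined_vert {m : ℕ} (f g : ConfSpace Annulus m) (hs : ∀ i, (f.1 i).1 = (g.1 i).1)
    (hord : ∀ i j, (f.1 i).1 = (f.1 j).1 →
      ((f.1 i).2 < (f.1 j).2 ↔ (g.1 i).2 < (g.1 j).2)) : Joined f g := by
  have key : ∀ u : unitInterval, Function.Injective
      (fun i => (((f.1 i).1, (1 - (u : ℝ)) * (f.1 i).2 + (u : ℝ) * (g.1 i).2) : Annulus)) := by
    intro u i j hij
    have h1' := congrArg Prod.fst hij
    have h2' := congrArg Prod.snd hij
    have h1 : (f.1 i).1 = (f.1 j).1 := h1'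
    have h2 : (1 - (u : ℝ)) * (f.1 i).2 + (u : ℝ) * (g.1 i).2
        = (1 - (u : ℝ)) * (f.1 j).2 + (u : ℝ) * (g.1 j).2 := h2'
    by_contra hne
    have hf2 : (f.1 i).2 ≠ (f.1 j).2 := fun h => hne (f.2 (Prod.ext_iff.mpr ⟨h1, h⟩))
    rcases hf2.lt_or_gt with hlt | hlt
    · have hg := (hord i j h1).mp hlt
      exact absurd h2 (ne_of_lt (interp_lt u.2.1 u.2.2 hlt hg))
    · have hg := (hord j i h1.symm).mp hlt
      exact absurd h2.symm (ne_of_lt (interp_lt u.2.1 u.2.2 hlt hg))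
  refine ⟨⟨⟨fun u => ⟨fun i => ((f.1 i).1, (1 - (u : ℝ)) * (f.1 i).2 + (u : ℝ) * (g.1 i).2),
    key u⟩, ?_⟩, ?_, ?_⟩⟩
  · refine Continuous.subtype_mk (continuous_pi fun i => ?_) _
    exact continuous_const.prodMk
      (((continuous_const.sub continuous_subtype_val).mul continuous_const).add
        (continuous_subtype_val.mul continuous_const))
  · exact Subtype.ext (funext fun i => by simp; rfl)
  · exact Subtype.ext (funext fun i => by simp [hs i]; rfl)

/-- Horizontal move: rotate along the circles, heights fixed and distinct. -/
lemma joined_horiz {m : ℕ} (f g : ConfSpace Annulus m) (ht : ∀ i, (f.1 i).2 = (g.1 i).2)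
    (hinj : Function.Injective fun i => (f.1 i).2) : Joined f g := by
  have hrank : 1 < Module.rank ℝ (ℝ × ℝ) := by
    rw [rank_prod', Module.rank_self, one_add_one_eq_two]
    exact Cardinal.one_lt_two
  have hpc : PathConnectedSpace (Metric.sphere (0 : ℝ × ℝ) 1) :=
    isPathConnected_iff_pathConnectedSpace.mp (isPathConnected_sphere hrank 0 zero_le_one)
  let γ : ∀ i, Path (f.1 i).1 (g.1 i).1 := fun i => PathConnectedSpace.somePath _ _
  have key : ∀ u : unitInterval, Function.Injective
      (fun i => ((γ i u, (f.1 i).2) : Annulus)) := by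
    intro u i j hij
    have h2 := congrArg Prod.snd hij
    exact hinj h2
  refine ⟨⟨⟨fun u => ⟨fun i => (γ i u, (f.1 i).2), key u⟩, ?_⟩, ?_, ?_⟩⟩
  · exact Continuous.subtype_mk
      (continuous_pi fun i => ((γ i).continuous).prodMk continuous_const) _
  · exact Subtype.ext (funext fun i => by simp [γ]; rfl)
  · exact Subtype.ext (funext fun i => by simp [γ, ht i]; rfl)

/-- Lexicographic strict order on the labels of a configuration. -/
def lexLt {m : ℕ} (f : ConfSpace Annulus m) (i j : Fin m) : Prop :=
  (f.1 i).2 < (f.1 j).2 ∨ ((f.1 i).2 = (f.1 j).2 ∧ i < j)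

lemma lexLt_trans {m : ℕ} (f : ConfSpace Annulus m) {i j k : Fin m} :
    lexLt f i j → lexLt f j k → lexLt f i k := by
  rintro (h | ⟨h, h'⟩) (h2 | ⟨h2, h2'⟩)
  · exact Or.inl (h.trans h2)
  · exact Or.inl (h2 ▸ h)
  · exact Or.inl (h ▸ h2)
  · exact Or.inr ⟨h.trans h2, h'.trans h2'⟩

lemma lexLt_irrefl {m : ℕ} (f : ConfSpace Annulus m) (i : Fin m) : ¬ lexLt f i i := by
  rintro (h | ⟨h, h'⟩)
  · exact lt_irrefl _ h
  · exact lt_irrefl _ h'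

lemma lexLt_total {m : ℕ} (f : ConfSpace Annulus m) {i j : Fin m} (hij : i ≠ j) :
    lexLt f i j ∨ lexLt f j i := by
  rcases lt_trichotomy (f.1 i).2 (f.1 j).2 with h | h | h
  · exact Or.inl (Or.inl h)
  · rcases hij.lt_or_gt with h' | h'
    · exact Or.inl (Or.inr ⟨h, h'⟩)
    · exact Or.inr (Or.inr ⟨h.symm, h'⟩)
  · exact Or.inr (Or.inl h)

open scoped Classical in
/-- The rank of a label in the lexicographic order, as a real number. -/
def rnk {m : ℕ} (f : ConfSpace Annulus m) (i : Fin m) : ℝ :=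
  ((Finset.univ.filter fun j => lexLt f j i).card : ℝ)

lemma rnk_lt_rnk {m : ℕ} (f : ConfSpace Annulus m) {i j : Fin m} (h : lexLt f i j) :
    rnk f i < rnk f j := by
  classical
  have hsub : (Finset.univ.filter fun k => lexLt f k i)
      ⊆ (Finset.univ.filter fun k => lexLt f k j) := fun k hk => by
    simp only [Finset.mem_filter, Finset.mem_univ, true_and] at hk ⊢
    exact lexLt_trans f hk h
  have hcard := Finset.card_lt_card ((Finset.ssubset_iff_of_subset hsub).mpr
    ⟨i, by simpa using h, by simpa using lexLt_irrefl f i⟩)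
  unfold rnk
  exact_mod_cast hcard

lemma rnk_injective {m : ℕ} (f : ConfSpace Annulus m) : Function.Injective (rnk f) := by
  intro i j h
  by_contra hne
  rcases lexLt_total f hne with hl | hl
  · exact absurd h (ne_of_lt (rnk_lt_rnk f hl))
  · exact absurd h.symm (ne_of_lt (rnk_lt_rnk f hl))

lemma lt_rnk_iff {m : ℕ} (f : ConfSpace Annulus m) {i j : Fin m} (hne : i ≠ j) :
    rnk f i < rnk f j ↔ lexLt f i j := by
  constructor
  · intro h
    rcases lexLt_total f hne with hl | hl
    · exact hl
    · exact absurd h (not_lt_of_gt (rnk_lt_rnk f hl))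
  · exact rnk_lt_rnk f

/-- `m` distinct points on the (sup-norm) unit circle. -/
def phi {m : ℕ} (i : Fin m) : Metric.sphere (0 : ℝ × ℝ) 1 :=
  ⟨((1 : ℝ), (i : ℝ) / (m : ℝ)), by
    have hm : 0 < (m : ℝ) := by exact_mod_cast i.pos
    have h0 : (0 : ℝ) ≤ (i : ℝ) / m := by positivity
    have h1 : (i : ℝ) / m < 1 := by
      rw [div_lt_one hm]
      exact_mod_cast i.2
    rw [mem_sphere_zero_iff_norm, Prod.norm_def]
    simp only [Real.norm_eq_abs, abs_one, abs_of_nonneg h0]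
    exact max_eq_left h1.le⟩

lemma phi_injective {m : ℕ} : Function.Injective (phi (m := m)) := by
  intro i j h
  have hm : ((m : ℝ)) ≠ 0 := by
    have : 0 < (m : ℝ) := by exact_mod_cast i.pos
    exact this.ne'
  have h2 : (i : ℝ) / m = (j : ℝ) / m := congrArg (fun x => x.1.2) h
  field_simp at h2
  have h3 : (i : ℕ) = (j : ℕ) := by exact_mod_cast h2
  exact Fin.ext h3

def cfg1 {m : ℕ} (h : ConfSpace Annulus m) : ConfSpace Annulus m :=
  ⟨fun i => ((h.1 i).1, rnk h i), fun i j hij => rnk_injective h (congrArg Prod.snd hij)⟩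

def cfg2 {m : ℕ} (h : ConfSpace Annulus m) : ConfSpace Annulus m :=
  ⟨fun i => (circBase, rnk h i), fun i j hij => rnk_injective h (congrArg Prod.snd hij)⟩

def cfg3 {m : ℕ} (h : ConfSpace Annulus m) : ConfSpace Annulus m :=
  ⟨fun i => (phi i, rnk h i), fun i j hij => rnk_injective h (congrArg Prod.snd hij)⟩

lemma joined_cfg1 {m : ℕ} (h : ConfSpace Annulus m) : Joined h (cfg1 h) := by
  refine joined_vert h (cfg1 h) (fun i => rfl) (fun i j hfst => ?_)
  by_cases hij : i = j
  · subst hij; exact iff_of_false (lt_irrefl _) (lt_irrefl _)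
  · have hne2 : (h.1 i).2 ≠ (h.1 j).2 := fun e => hij (h.2 (Prod.ext_iff.mpr ⟨hfst, e⟩))
    show (h.1 i).2 < (h.1 j).2 ↔ rnk h i < rnk h j
    rw [lt_rnk_iff h hij]
    constructor
    · exact fun hlt => Or.inl hlt
    · rintro (hlt | ⟨he, _⟩)
      · exact hlt
      · exact absurd he hne2

lemma joined_cfg2 {m : ℕ} (h : ConfSpace Annulus m) : Joined (cfg1 h) (cfg2 h) :=
  joined_horiz _ _ (fun i => rfl) (fun i j e => rnk_injective h e)

lemma joined_cfg3 {m : ℕ} (h : ConfSpace Annulus m) : Joined (cfg2 h) (cfg3 h) :=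
  joined_horiz _ _ (fun i => rfl) (fun i j e => rnk_injective h e)

lemma conf_annulus_joined {m : ℕ} (f g : ConfSpace Annulus m) : Joined f g := by
  have step4 : Joined (cfg3 f) (cfg3 g) := by
    refine joined_vert _ _ (fun i => rfl) (fun i j hfst => ?_)
    have : i = j := phi_injective hfst
    subst this
    exact iff_of_false (lt_irrefl _) (lt_irrefl _)
  exact ((joined_cfg1 f).trans ((joined_cfg2 f).trans ((joined_cfg3 f).trans
    (step4.trans ((joined_cfg3 g).symm.trans
      ((joined_cfg2 g).symm.trans (joined_cfg1 g).symm))))))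

/-- The pure braid group of the disc on `n` strands is isomorphic to the pure braid group of
the annulus on `n - 1` strands. -/
theorem stmt14 (n : ℕ) (hn : 1 ≤ n) (c : ConfSpace Disc n) (c' : ConfSpace Annulus (n - 1)) :
    Nonempty (FundamentalGroup (ConfSpace Disc n) c ≃*
      FundamentalGroup (ConfSpace Annulus (n - 1)) c') := by
  obtain ⟨m, rfl⟩ : ∃ m, n = m + 1 := ⟨n - 1, (Nat.succ_pred_eq_of_pos hn).symm⟩
  let H : ContinuousMap.HomotopyEquiv (ConfSpace Disc (m + 1)) (ConfSpace Annulus m) :=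
    ((confHomeo discHomeo (m + 1)).toHomotopyEquiv.trans
      ((fnHomeo m).toHomotopyEquiv.trans
        ((prodSndHE _).trans (confHomeo annulusHomeo.symm m).toHomotopyEquiv)))
  exact ⟨(pi1EquivOfHE H c).trans
    (FundamentalGroup.fundamentalGroupMulEquivOfPath
      (conf_annulus_joined (H.toFun c) c').somePath)⟩
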